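/- arXiv:2212.00278 — 2 statements merged into one kernel-verified Lean document; each statement's English description precedes it below -/
import Mathlib

section
/- Theorem 1 (average coverage of ACP for one-step-ahead prediction errors): Let γ > 0 be a learning rate, δ ∈ (0,1), δ_0 ∈ (0,1) an initial value for the recursion δ_{t+1} = δ_t + γ(δ - e_{t+1}) where e_{t+1} is the indicator that the random nonconformity score R_{t+1} exceeds the prediction region C_{t+1} (e_{t+1} = 0 iff R_{t+1} ≤ C_{t+1}). Assume the almost-sure stepsize bound guaranteeing (-(1-δ_0) - γ)/(Tγ) ≤ (1/T)Σ_{t=0}^{T-1} e_{t+1} - δ ≤ (δ_0 + γ)/(Tγ) holds surely. Then 1 - δ - p₁ ≤ (1/T)Σ_{t=0}^{T-1} P(R_{t+1} ≤ C_{t+1}) ≤ 1 - δ + p₂, where p₁ = (δ_0 + γ)/(Tγ) and p₂ = ((1-δ_0) + γ)/(Tγ); moreover p₁ → 0 and p₂ → 0 as T → ∞. -/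
open MeasureTheory ProbabilityTheory Filter

/-- Theorem 1: average coverage of ACP for one-step-ahead prediction errors. -/
theorem stmt_5
    {Ω : Type*} [MeasureSpace Ω] [IsProbabilityMeasure (ℙ : Measure Ω)]
    (γ δ δ0 : ℝ) (T : ℕ)
    (hγ : 0 < γ) (hδ : δ ∈ Set.Ioo (0:ℝ) 1) (hδ0 : δ0 ∈ Set.Ioo (0:ℝ) 1) (hT : 1 ≤ T)
    (R C : ℕ → Ω → ℝ) (e : ℕ → Ω → ℝ)
    (hmeas : ∀ t, MeasurableSet {ω | R t ω ≤ C t ω})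
    (he : ∀ t ω, e t ω = if R t ω ≤ C t ω then 0 else 1)
    (hsand : ∀ ω,
      (-(1 - δ0) - γ) / (T * γ) ≤ (1 / (T:ℝ)) * (∑ t ∈ Finset.range T, e (t + 1) ω) - δ ∧
      (1 / (T:ℝ)) * (∑ t ∈ Finset.range T, e (t + 1) ω) - δ ≤ (δ0 + γ) / (T * γ)) :
    (1 - δ - (δ0 + γ) / (T * γ) ≤
        (1 / (T:ℝ)) * ∑ t ∈ Finset.range T, (ℙ {ω | R (t + 1) ω ≤ C (t + 1) ω}).toReal ∧
      (1 / (T:ℝ)) * ∑ t ∈ Finset.range T, (ℙ {ω | R (t + 1) ω ≤ C (t + 1) ω}).toReal ≤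
        1 - δ + ((1 - δ0) + γ) / (T * γ)) ∧
    Tendsto (fun T : ℕ => (δ0 + γ) / (T * γ)) atTop (nhds 0) ∧
    Tendsto (fun T : ℕ => ((1 - δ0) + γ) / (T * γ)) atTop (nhds 0) := by
  have hInd : ∀ t, e t = ({ω | R t ω ≤ C t ω}ᶜ).indicator (fun _ => (1:ℝ)) := by
    intro t; funext ω
    by_cases h : R t ω ≤ C t ω <;> simp [he, h, Set.indicator]
  have hint : ∀ t, Integrable (e t) ℙ := by
    intro t; rw [hInd]
    exact (integrable_const (1:ℝ)).indicator (hmeas t).compl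
  have hIe : ∀ t, ∫ ω, e t ω = 1 - (ℙ {ω | R t ω ≤ C t ω}).toReal := by
    intro t
    rw [hInd, integral_indicator_const _ (hmeas t).compl]
    rw [measureReal_def, measure_compl (hmeas t) (measure_ne_top _ _), measure_univ]
    rw [ENNReal.toReal_sub_of_le prob_le_one ENNReal.one_ne_top]
    simp
  set S : Ω → ℝ := fun ω => (1 / (T:ℝ)) * (∑ t ∈ Finset.range T, e (t + 1) ω) with hS
  have hSint : Integrable S ℙ := by
    apply Integrable.const_mul
    exact integrable_finset_sum _ (fun t _ => hint (t + 1))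
  have hIS : ∫ ω, S ω =
      1 - (1 / (T:ℝ)) * ∑ t ∈ Finset.range T, (ℙ {ω | R (t + 1) ω ≤ C (t + 1) ω}).toReal := by
    rw [hS]
    rw [integral_const_mul, integral_finset_sum _ (fun t _ => hint (t + 1))]
    have : ∑ t ∈ Finset.range T, ∫ ω, e (t + 1) ω
        = ∑ t ∈ Finset.range T, (1 - (ℙ {ω | R (t + 1) ω ≤ C (t + 1) ω}).toReal) := by
      exact Finset.sum_congr rfl fun t _ => hIe (t + 1)
    rw [this, Finset.sum_sub_distrib, mul_sub, Finset.sum_const, Finset.card_range,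
      nsmul_eq_mul]
    have hT0 : (T:ℝ) ≠ 0 := by
      have : (0:ℕ) < T := lt_of_lt_of_le one_pos hT
      exact_mod_cast this.ne'
    field_simp
  have hlow : ∀ ω, δ + ((-(1 - δ0) - γ) / (T * γ)) ≤ S ω := fun ω => by
    have := (hsand ω).1; simp only [hS]; linarith
  have hhigh : ∀ ω, S ω ≤ δ + (δ0 + γ) / (T * γ) := fun ω => by
    have := (hsand ω).2; simp only [hS]; linarith
  have hlowI : δ + ((-(1 - δ0) - γ) / (T * γ)) ≤ ∫ ω, S ω := by
    have := integral_mono (integrable_const _) hSint hlow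
    simpa using this
  have hhighI : ∫ ω, S ω ≤ δ + (δ0 + γ) / (T * γ) := by
    have := integral_mono hSint (integrable_const _) hhigh
    simpa using this
  refine ⟨⟨by rw [hIS] at hhighI; linarith, by
      rw [hIS] at hlowI
      have : (-(1 - δ0) - γ) / (T * γ) = -(((1 - δ0) + γ) / (T * γ)) := by ring
      rw [this] at hlowI; linarith⟩, ?_, ?_⟩
  · have : (fun T : ℕ => (δ0 + γ) / (T * γ)) = fun T : ℕ => ((δ0 + γ) / γ) * (T:ℝ)⁻¹ := by
      funext n; rcases eq_or_ne (n:ℝ) 0 with h | h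
      · simp [h]
      · field_simp
    rw [this]
    simpa using (tendsto_natCast_atTop_atTop (R := ℝ)).inv_tendsto_atTop.const_mul ((δ0 + γ) / γ)
  · have : (fun T : ℕ => ((1 - δ0) + γ) / (T * γ)) = fun T : ℕ => (((1 - δ0) + γ) / γ) * (T:ℝ)⁻¹ := by
      funext n; rcases eq_or_ne (n:ℝ) 0 with h | h
      · simp [h]
      · field_simp
    rw [this]
    simpa using (tendsto_natCast_atTop_atTop (R := ℝ)).inv_tendsto_atTop.const_mul (((1 - δ0) + γ) / γ)
end

section
/- Quantile coverage in conformal prediction: Let R_1, …, R_{t+1} be exchangeable real-valued random variables (in particular, i.i.d.), let δ ∈ (0,1), and let q := ⌈(t+1)(1-δ)⌉. If q ≤ t, define C as the q-th smallest value among R_1, …, R_t. Then P(R_{t+1} ≤ C) ≥ 1 - δ. -/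
open MeasureTheory ProbabilityTheory
open scoped ENNReal

lemma sorted_lt_iff (v : ℝ) : ∀ (L : List ℝ), L.Pairwise (· ≤ ·) →
    ∀ (i : ℕ) (h : i < L.length),
    (L.get ⟨i, h⟩ < v ↔ i < L.countP (fun a => decide (a < v))) := by
  intro L
  induction L with
  | nil => intro _ i h; simp at h
  | cons a L ih =>
    intro hs i h
    rw [List.pairwise_cons] at hs
    by_cases hav : a < v
    · cases i with
      | zero => simpa [List.countP_cons, hav] using Nat.succ_pos _
      | succ n =>
        have hn : n < L.length := by simpa using h
        simp only [List.get_cons_succ]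
        rw [ih hs.2 n hn]
        simp [List.countP_cons, hav]
    · have hall : ∀ b ∈ a :: L, ¬ b < v := by
        intro b hb
        rcases List.mem_cons.1 hb with rfl | hb
        · exact hav
        · exact fun hbv => hav (lt_of_le_of_lt (hs.1 b hb) hbv)
      have hc : (a :: L).countP (fun a => decide (a < v)) = 0 := by
        rw [List.countP_eq_zero]
        intro b hb
        simpa using hall b hb
      rw [hc]
      constructor
      · intro hlt
        exact absurd hlt (hall _ (List.get_mem _ _))
      · omega

lemma rank_count {n q : ℕ} (hq1 : 1 ≤ q) (hqn : q ≤ n) (x : Fin n → ℝ)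
    (hx : Function.Injective x) :
    (Finset.univ.filter fun i =>
      (Finset.univ.filter fun j => x j ≤ x i).card ≤ q).card = q := by
  set r : Fin n → ℕ := fun i => (Finset.univ.filter fun j => x j ≤ x i).card with hr
  have hmono : ∀ i k, x i < x k → r i < r k := by
    intro i k hik
    apply Finset.card_lt_card
    constructor
    · intro j hj
      simp only [Finset.mem_filter, Finset.mem_univ, true_and] at hj ⊢
      exact hj.trans hik.le
    · intro hsub
      have : k ∈ Finset.univ.filter fun j => x j ≤ x i := by
        apply hsub; simp
      simp only [Finset.mem_filter, Finset.mem_univ, true_and] at this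
      exact absurd hik (not_lt.2 this)
  have hrinj : Function.Injective r := by
    intro i k hrik
    by_contra hik
    rcases lt_or_gt_of_ne (fun he => hik (hx he)) with h | h
    · exact absurd hrik (Nat.ne_of_lt (hmono _ _ h))
    · exact absurd hrik.symm (Nat.ne_of_lt (hmono _ _ h))
  have himg : Finset.univ.image r = Finset.Icc 1 n := by
    apply Finset.eq_of_subset_of_card_le
    · intro m hm
      simp only [Finset.mem_image, Finset.mem_univ, true_and] at hm
      obtain ⟨i, rfl⟩ := hm
      rw [Finset.mem_Icc]
      constructor
      · rw [hr]
        refine Finset.card_pos.2 ⟨i, ?_⟩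
        simp
      · calc r i ≤ Finset.univ.card := Finset.card_filter_le _ _
          _ = n := by simp
    · rw [Nat.card_Icc, Finset.card_image_of_injective _ hrinj]
      simp
  have key : (Finset.univ.filter fun i => r i ≤ q) = Finset.univ.filter fun i => r i ∈ Finset.Icc 1 q := by
    apply Finset.filter_congr
    intro i _
    simp only [Finset.mem_Icc, iff_and_self]
    intro _
    rw [hr]
    refine Nat.one_le_iff_ne_zero.2 (Finset.card_ne_zero.2 ⟨i, ?_⟩)
    simp
  rw [key]
  have := Finset.card_image_of_injective (Finset.univ.filter fun i => r i ∈ Finset.Icc 1 q) hrinj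
  rw [← this]
  have h2 : Finset.image r (Finset.univ.filter fun i => r i ∈ Finset.Icc 1 q) = Finset.Icc 1 q := by
    ext m
    simp only [Finset.mem_image, Finset.mem_filter, Finset.mem_univ, true_and, Finset.mem_Icc]
    constructor
    · rintro ⟨i, ⟨h1, h2⟩, rfl⟩
      exact ⟨h1, h2⟩
    · rintro ⟨h1, h2⟩
      have : m ∈ Finset.univ.image r := by
        rw [himg, Finset.mem_Icc]
        exact ⟨h1, h2.trans hqn⟩
      simp only [Finset.mem_image, Finset.mem_univ, true_and] at this
      obtain ⟨i, rfl⟩ := this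
      exact ⟨i, ⟨h1, h2⟩, rfl⟩
  rw [h2, Nat.card_Icc]
  omega

lemma coverage_iff (t q : ℕ) (hq1 : 1 ≤ q) (hqt : q ≤ t) (x : Fin (t+1) → ℝ)
    (hx : Function.Injective x) :
    (x (Fin.last t) ≤ (Multiset.sort
        (Multiset.map (fun i : Fin t => x i.castSucc) Finset.univ.val) (· ≤ ·)).getD (q-1) 0)
    ↔ (Finset.univ.filter fun j => x j ≤ x (Fin.last t)).card ≤ q := by
  set v := x (Fin.last t) with hv
  set L := Multiset.sort
      (Multiset.map (fun i : Fin t => x i.castSucc) Finset.univ.val) (· ≤ ·) with hL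
  have hlen : L.length = t := by
    rw [hL, Multiset.length_sort, Multiset.card_map]
    simp
  have hq1t : q - 1 < L.length := by omega
  have hsorted : L.Pairwise (· ≤ ·) := Multiset.pairwise_sort _ _
  set m := L.countP (fun a => decide (a < v)) with hm
  have hm' : m = (Finset.univ.filter fun i : Fin t => x i.castSucc < v).card := by
    have h1 : (m : ℕ) = Multiset.countP (fun a => a < v) (↑L) := by
      simp [hm, Multiset.coe_countP]
    rw [h1, hL, Multiset.sort_eq, Multiset.countP_map]
    rfl
  have hrank : (Finset.univ.filter fun j => x j ≤ v).card = m + 1 := by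
    rw [Finset.card_filter, Fin.sum_univ_castSucc]
    have hlast : (if v ≤ v then 1 else 0) = 1 := if_pos le_rfl
    rw [hlast, hm']
    congr 1
    rw [Finset.card_filter]
    apply Finset.sum_congr rfl
    intro i _
    have hne : x i.castSucc ≠ v := by
      intro he
      exact absurd (hx he) (Fin.ne_of_lt (Fin.castSucc_lt_last i))
    rcases lt_or_ge (x i.castSucc) v with h | h
    · rw [if_pos h.le, if_pos h]
    · rw [if_neg (fun h' => hne (le_antisymm h' h)), if_neg (not_lt.2 h)]
  rw [hrank]
  have hg : L.getD (q-1) 0 = L.get ⟨q-1, hq1t⟩ := by simp [List.getD_eq_getElem?_getD, hq1t]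
  rw [hg, ← not_lt, sorted_lt_iff v L hsorted (q-1) hq1t]
  omega

/-- Split conformal prediction coverage guarantee for exchangeable scores. -/
theorem stmt_11
    {Ω : Type*} [MeasureSpace Ω] [IsProbabilityMeasure (ℙ : Measure Ω)]
    (t : ℕ) (R : Fin (t + 1) → Ω → ℝ)
    (hmeas : ∀ i, Measurable (R i))
    (hexch : ∀ σ : Equiv.Perm (Fin (t + 1)),
      Measure.map (fun ω => fun i => R (σ i) ω) ℙ =
        Measure.map (fun ω => fun i => R i ω) ℙ)
    (hties : ∀ i j, i ≠ j → ℙ {ω | R i ω = R j ω} = 0)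
    (δ : ℝ) (hδ : δ ∈ Set.Ioo (0:ℝ) 1)
    (q : ℕ) (hq : q = ⌈((t : ℝ) + 1) * (1 - δ)⌉₊) (hqt : q ≤ t) :
    1 - δ ≤ (ℙ {ω | R (Fin.last t) ω ≤
      ((Multiset.sort
        (Multiset.map (fun i : Fin t => R i.castSucc ω) Finset.univ.val) (· ≤ ·)).getD (q - 1) 0)}).toReal := by
  obtain ⟨hδ0, hδ1⟩ := hδ
  have hq1 : 1 ≤ q := by
    rw [hq]
    refine Nat.one_le_iff_ne_zero.2 (fun h0 => ?_)
    have := Nat.ceil_pos.2 (show (0:ℝ) < ((t:ℝ)+1)*(1-δ) from mul_pos (by positivity) (by linarith))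
    omega
  -- setup
  set X : Ω → (Fin (t+1) → ℝ) := fun ω i => R i ω with hXdef
  have hX : Measurable X := measurable_pi_lambda _ hmeas
  set ν : Measure (Fin (t+1) → ℝ) := Measure.map X ℙ with hν
  have hνprob : IsProbabilityMeasure ν := Measure.isProbabilityMeasure_map hX.aemeasurable
  set S : Fin (t+1) → Set (Fin (t+1) → ℝ) := fun i =>
    {x | (Finset.univ.filter fun j => x j ≤ x i).card ≤ q} with hSdef
  have hrmeas : ∀ i, Measurable fun x : Fin (t+1) → ℝ =>
      (Finset.univ.filter fun j => x j ≤ x i).card := by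
    intro i
    simp only [Finset.card_filter]
    apply Finset.measurable_sum
    intro j _
    exact Measurable.ite (measurableSet_le (measurable_pi_apply j) (measurable_pi_apply i))
      measurable_const measurable_const
  have hSmeas : ∀ i, MeasurableSet (S i) := by
    intro i
    exact measurableSet_le (hrmeas i) measurable_const
  set T : Set (Fin (t+1) → ℝ) := {x | Function.Injective x} with hTdef
  set N : Set (Fin (t+1) → ℝ) := ⋃ i, ⋃ j, ⋃ (_ : i ≠ j), {x | x i = x j} with hNdef
  have hTN : Tᶜ = N := by
    ext x
    simp only [hTdef, hNdef, Set.mem_compl_iff, Set.mem_setOf_eq, Set.mem_iUnion,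
      Function.Injective]
    constructor
    · intro h
      push_neg at h
      obtain ⟨i, j, hij, hne⟩ := h
      exact ⟨i, j, hne, hij⟩
    · rintro ⟨i, j, hne, hij⟩ h
      exact hne (h hij)
  have hNmeas : MeasurableSet N := by
    refine MeasurableSet.iUnion fun i => MeasurableSet.iUnion fun j =>
      MeasurableSet.iUnion fun _ => ?_
    exact measurableSet_eq_fun (measurable_pi_apply i) (measurable_pi_apply j)
  have hNnull : ν N = 0 := by
    refine measure_iUnion_null fun i => measure_iUnion_null fun j => ?_
    rcases eq_or_ne i j with rfl | hij
    · simp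
    · refine measure_iUnion_null fun hij' => ?_
      rw [hν, Measure.map_apply hX
        (measurableSet_eq_fun (measurable_pi_apply i) (measurable_pi_apply j))]
      exact hties i j hij
  have hTmeas : MeasurableSet T := by
    rw [← compl_compl T, hTN]; exact hNmeas.compl
  have hTnull : ν Tᶜ = 0 := by rw [hTN]; exact hNnull
  -- exchangeability
  have hexch' : ∀ i, ν (S i) = ν (S (Fin.last t)) := by
    intro i
    set σ := Equiv.swap i (Fin.last t) with hσ
    set g : (Fin (t+1) → ℝ) → (Fin (t+1) → ℝ) := fun x => fun k => x (σ k) with hg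
    have hgm : Measurable g := measurable_pi_lambda _ fun k => measurable_pi_apply _
    have h1 : Measure.map g ν = ν := by
      rw [hν, Measure.map_map hgm hX]
      exact hexch σ
    have hpre : g ⁻¹' (S i) = S (Fin.last t) := by
      ext x
      simp only [hSdef, hg, Set.mem_preimage, Set.mem_setOf_eq]
      have hcard : (Finset.univ.filter fun j => x (σ j) ≤ x (σ i)).card
          = (Finset.univ.filter fun j => x j ≤ x (σ i)).card := by
        refine Finset.card_bij (fun a _ => σ a) ?_ ?_ ?_
        · intro a ha
          simp only [Finset.mem_filter, Finset.mem_univ, true_and] at ha ⊢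
          exact ha
        · intro a _ b _ hab
          exact σ.injective hab
        · intro b hb
          simp only [Finset.mem_filter, Finset.mem_univ, true_and] at hb
          refine ⟨σ.symm b, ?_, by simp⟩
          simp only [Finset.mem_filter, Finset.mem_univ, true_and, Equiv.apply_symm_apply]
          exact hb
      rw [hcard, hσ, Equiv.swap_apply_left]
    calc ν (S i) = (Measure.map g ν) (S i) := by rw [h1]
      _ = ν (g ⁻¹' (S i)) := Measure.map_apply hgm (hSmeas i)
      _ = ν (S (Fin.last t)) := by rw [hpre]
  -- the sum of measures equals q
  have hsum : ∑ i : Fin (t+1), ν (S i) = (q : ℝ≥0∞) := by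
    have h1 : ∀ i : Fin (t+1), ν (S i)
        = ∫⁻ x, (S i ∩ T).indicator (1 : (Fin (t+1) → ℝ) → ℝ≥0∞) x ∂ν := by
      intro i
      rw [lintegral_indicator_one ((hSmeas i).inter hTmeas), measure_inter_conull hTnull]
    rw [Finset.sum_congr rfl (fun i _ => h1 i),
      show (∑ i : Fin (t+1), ∫⁻ x, (S i ∩ T).indicator (1:(Fin (t+1)→ℝ)→ℝ≥0∞) x ∂ν)
        = ∫⁻ x, ∑ i : Fin (t+1), (S i ∩ T).indicator (1:(Fin (t+1)→ℝ)→ℝ≥0∞) x ∂ν from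
      (lintegral_finset_sum _ (fun i _ =>
        (measurable_const.indicator ((hSmeas i).inter hTmeas)))).symm]
    have h2 : ∀ x, (∑ i : Fin (t+1), (S i ∩ T).indicator (1 : (Fin (t+1) → ℝ) → ℝ≥0∞) x)
        = T.indicator (fun _ => (q:ℝ≥0∞)) x := by
      intro x
      by_cases hxT : x ∈ T
      · rw [Set.indicator_of_mem hxT]
        have h3 : ∀ i : Fin (t+1), (S i ∩ T).indicator (1 : (Fin (t+1) → ℝ) → ℝ≥0∞) x
            = if x ∈ S i then 1 else 0 := by
          intro i
          by_cases hxS : x ∈ S i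
          · rw [Set.indicator_of_mem (Set.mem_inter hxS hxT), if_pos hxS]; rfl
          · rw [Set.indicator_of_notMem (fun h => hxS h.1), if_neg hxS]
        rw [Finset.sum_congr rfl (fun i _ => h3 i)]
        have h4 : (∑ i : Fin (t+1), if x ∈ S i then (1:ℝ≥0∞) else 0)
            = ((Finset.univ.filter fun i => x ∈ S i).card : ℝ≥0∞) := by
          rw [Finset.card_filter, Nat.cast_sum]
          refine Finset.sum_congr rfl fun i _ => ?_
          split <;> simp
        rw [h4]
        congr 1
        have := rank_count (n := t+1) hq1 (by omega) x hxT
        simp only [hSdef, Set.mem_setOf_eq]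
        rw [this]
      · rw [Set.indicator_of_notMem hxT]
        refine Finset.sum_eq_zero fun i _ => ?_
        exact Set.indicator_of_notMem (fun h => hxT h.2) _
    rw [lintegral_congr h2, lintegral_indicator_const hTmeas]
    have hT1 : ν T = 1 := by
      have := measure_add_measure_compl (μ := ν) hTmeas
      rw [hTnull, add_zero] at this
      rw [this, measure_univ]
    rw [hT1, mul_one]
  -- conclude ν (S last) = q / (t+1)
  have hlast : ν (S (Fin.last t)) = (q : ℝ≥0∞) / ((t:ℝ≥0∞) + 1) := by
    have h5 : ∑ i : Fin (t+1), ν (S i) = ((t:ℝ≥0∞) + 1) * ν (S (Fin.last t)) := by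
      rw [Finset.sum_congr rfl (fun i _ => hexch' i), Finset.sum_const, Finset.card_univ,
        Fintype.card_fin, nsmul_eq_mul]
      push_cast
      ring
    rw [h5] at hsum
    rw [ENNReal.eq_div_iff (by simp) (by simp)]
    exact hsum
  -- identify the probability with ν (S last)
  have hEeq : ℙ {ω | R (Fin.last t) ω ≤
      ((Multiset.sort
        (Multiset.map (fun i : Fin t => R i.castSucc ω) Finset.univ.val) (· ≤ ·)).getD (q - 1) 0)}
      = ν (S (Fin.last t)) := by
    have hae : {ω | R (Fin.last t) ω ≤
        ((Multiset.sort
          (Multiset.map (fun i : Fin t => R i.castSucc ω) Finset.univ.val) (· ≤ ·)).getD (q - 1) 0)}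
        =ᵐ[ℙ] X ⁻¹' (S (Fin.last t)) := by
      rw [Filter.eventuallyEq_set]
      rw [MeasureTheory.ae_iff]
      refine measure_mono_null ?_ (show ℙ (X ⁻¹' Tᶜ) = 0 by
        rw [← Measure.map_apply hX hTmeas.compl]
        exact hTnull)
      intro ω hω
      simp only [Set.mem_setOf_eq] at hω
      simp only [Set.mem_preimage, Set.mem_compl_iff]
      intro hT'
      apply hω
      have := coverage_iff t q hq1 hqt (X ω) hT'
      simp only [Set.mem_preimage, hSdef, Set.mem_setOf_eq]
      exact this
    rw [measure_congr hae, hν, Measure.map_apply hX (hSmeas _)]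
  rw [hEeq, hlast, ENNReal.toReal_div]
  rw [ENNReal.toReal_natCast]
  have htr : (((t:ℝ≥0∞) + 1)).toReal = (t:ℝ) + 1 := by
    rw [ENNReal.toReal_add (by simp) (by simp), ENNReal.toReal_natCast, ENNReal.toReal_one]
  rw [htr]
  rw [le_div_iff₀ (by positivity)]
  calc (1 - δ) * ((t:ℝ) + 1) = ((t:ℝ) + 1) * (1 - δ) := mul_comm _ _
    _ ≤ q := by rw [hq]; exact Nat.le_ceil _
end
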